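/- Let χ be an r-fold vector cross product on a real inner product space V with associated form φ, and define τ(v₁,...,v_{r+1}) = (1/√(r+1)) Σ_{k=1}^{r+1} (-1)^{k-1} v_k ∧ χ(v₁,...,v̂_k,...,v_{r+1}) ∈ Λ²V. Then for pairwise orthogonal vectors v₁,...,v_{r+1}, |φ(v₁,...,v_{r+1})|² + |τ(v₁,...,v_{r+1})|² = |v₁ ∧ ... ∧ v_{r+1}|². -/

import Mathlib

open scoped RealInnerProductSpace

/-- For an `r`-fold vector cross product `χ` with associated form `φ`, and
`τ(v₁,...,v_{r+1}) = (1/√(r+1)) Σ_k (-1)^{k-1} v_k ∧ χ(v₁,...,v̂_k,...,v_{r+1}) ∈ Λ²V`,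
one has, for pairwise orthogonal `v₁,...,v_{r+1}`:
`|φ(v)|² + |τ(v)|²_{Λ²} = |v₁ ∧ ... ∧ v_{r+1}|²`.
Here `|τ|²` is written out via the induced inner product on `Λ²V`,
`⟨a∧b, c∧d⟩ = ⟨a,c⟩⟨b,d⟩ - ⟨a,d⟩⟨b,c⟩`, and `|v₁∧...∧v_{r+1}|²` is the Gram
determinant. -/
theorem vcp_phi_tau_pythagoras
    {V : Type*} [NormedAddCommGroup V] [InnerProductSpace ℝ V] (r : ℕ)
    (χ : AlternatingMap ℝ V V (Fin r))
    (hperp : ∀ (v : Fin r → V) (i : Fin r), ⟪χ v, v i⟫ = 0)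
    (hnorm : ∀ v : Fin r → V,
      ⟪χ v, χ v⟫ = Matrix.det (Matrix.of fun i j => ⟪v i, v j⟫))
    (v : Fin (r+1) → V)
    (horth : ∀ i j : Fin (r+1), i ≠ j → ⟪v i, v j⟫ = 0) :
    ⟪χ (fun k => v k.castSucc), v (Fin.last r)⟫ ^ 2
      + ((r : ℝ) + 1)⁻¹ *
        ∑ k : Fin (r+1), ∑ l : Fin (r+1),
          (-1 : ℝ) ^ ((k : ℕ) + (l : ℕ)) *
            (⟪v k, v l⟫ * ⟪χ (fun i => v (k.succAbove i)), χ (fun i => v (l.succAbove i))⟫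
              - ⟪v k, χ (fun i => v (l.succAbove i))⟫ * ⟪χ (fun i => v (k.succAbove i)), v l⟫)
      = Matrix.det (Matrix.of fun i j => ⟪v i, v j⟫) := by
  classical
  -- swap lemma
  have hswap : ∀ (w : Fin r → V) (i : Fin r) (a b : V),
      ⟪χ (Function.update w i a), b⟫ = -⟪χ (Function.update w i b), a⟫ := by
    intro w i a b
    have h := hperp (Function.update w i (a + b)) i
    rw [Function.update_self, χ.map_update_add] at h
    have ha := hperp (Function.update w i a) i
    have hb := hperp (Function.update w i b) i
    rw [Function.update_self] at ha hb
    simp only [inner_add_left, inner_add_right] at h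
    linarith
  set g : Fin (r+1) → ℝ := fun k => ⟪χ (fun i => v (k.succAbove i)), v k⟫ with hg
  have hsuccAbove_ne : ∀ (k : Fin r) (j : Fin r), j ≠ k →
      k.succ.succAbove j = k.castSucc.succAbove j := by
    intro k j hj
    rcases lt_or_gt_of_ne (fun h : (j:ℕ) = (k:ℕ) => hj (Fin.ext h)) with h | h
    · rw [Fin.succAbove_of_castSucc_lt _ _ (Fin.castSucc_lt_succ_iff.mpr (Fin.le_of_lt h)),
        Fin.succAbove_of_castSucc_lt _ _ (Fin.castSucc_lt_castSucc_iff.mpr h)]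
    · rw [Fin.succAbove_of_le_castSucc _ _ (Fin.succ_le_castSucc_iff.mpr h),
        Fin.succAbove_of_le_castSucc _ _ (Fin.castSucc_le_castSucc_iff.mpr (Fin.le_of_lt h))]
  have hstep : ∀ k : Fin r, g k.succ = - g k.castSucc := by
    intro k
    have h1 : (fun i => v (k.succ.succAbove i))
        = Function.update (fun i => v (k.castSucc.succAbove i)) k (v k.castSucc) := by
      funext j
      rcases eq_or_ne j k with rfl | hj
      · simp [Fin.succAbove_succ_self]
      · rw [Function.update_of_ne hj, hsuccAbove_ne k j hj]
    have h2 : Function.update (fun i => v (k.castSucc.succAbove i)) k (v k.succ)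
        = fun i => v (k.castSucc.succAbove i) := by
      funext j
      rcases eq_or_ne j k with rfl | hj
      · simp [Fin.succAbove_castSucc_self]
      · rw [Function.update_of_ne hj]
    show ⟪χ (fun i => v (k.succ.succAbove i)), v k.succ⟫
        = -⟪χ (fun i => v (k.castSucc.succAbove i)), v k.castSucc⟫
    rw [h1, hswap _ _ _ (v k.succ), h2]
  have hgsq : ∀ k : Fin (r+1), g k ^ 2 = g 0 ^ 2 := by
    intro k
    induction k using Fin.induction with
    | zero => rfl
    | succ i ih => rw [hstep]; rw [neg_pow]; simp [ih]
  -- diagonal Gram determinants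
  have hgram : ∀ (n : ℕ) (w : Fin n → V), (∀ i j, i ≠ j → ⟪w i, w j⟫ = 0) →
      Matrix.det (Matrix.of fun i j => ⟪w i, w j⟫) = ∏ i, ⟪w i, w i⟫ := by
    intro n w hw
    rw [show (Matrix.of fun i j => ⟪w i, w j⟫)
        = Matrix.diagonal (fun i => ⟪w i, w i⟫) from ?_, Matrix.det_diagonal]
    ext i j
    rcases eq_or_ne i j with rfl | hij
    · simp
    · simp [Matrix.diagonal, hij, hw i j hij]
  have hchik : ∀ k : Fin (r+1),
      ⟪χ (fun i => v (k.succAbove i)), χ (fun i => v (k.succAbove i))⟫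
        = ∏ i : Fin r, ⟪v (k.succAbove i), v (k.succAbove i)⟫ := by
    intro k
    rw [hnorm]
    exact hgram r (fun i => v (k.succAbove i)) (fun i j hij =>
      horth _ _ (fun h => hij (Fin.succAbove_right_injective h)))
  have hD : Matrix.det (Matrix.of fun i j => ⟪v i, v j⟫) = ∏ i, ⟪v i, v i⟫ :=
    hgram (r+1) v horth
  set D : ℝ := ∏ i, ⟪v i, v i⟫ with hDdef
  -- inner sum collapses to the diagonal
  have hinner : ∀ k : Fin (r+1),
      ∑ l : Fin (r+1),
          (-1 : ℝ) ^ ((k : ℕ) + (l : ℕ)) *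
            (⟪v k, v l⟫ * ⟪χ (fun i => v (k.succAbove i)), χ (fun i => v (l.succAbove i))⟫
              - ⟪v k, χ (fun i => v (l.succAbove i))⟫ * ⟪χ (fun i => v (k.succAbove i)), v l⟫)
        = D - g 0 ^ 2 := by
    intro k
    rw [Finset.sum_eq_single k]
    · have h1 : ⟪v k, χ (fun i => v (k.succAbove i))⟫ = g k := by
        rw [real_inner_comm]
      have h2 : ⟪χ (fun i => v (k.succAbove i)), v k⟫ = g k := rfl
      rw [h1, h2, hchik k]
      have hsign : (-1 : ℝ) ^ ((k : ℕ) + (k : ℕ)) = 1 := by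
        rw [← two_mul, pow_mul]; norm_num
      rw [hsign, one_mul]
      have hprod : ⟪v k, v k⟫ * ∏ i : Fin r, ⟪v (k.succAbove i), v (k.succAbove i)⟫ = D := by
        rw [hDdef, Fin.prod_univ_succAbove (fun i => ⟪v i, v i⟫) k]
      rw [hprod, ← hgsq k]; ring
    · intro l _ hlk
      have hvl : ⟪v k, v l⟫ = 0 := horth k l (fun h => hlk h.symm)
      obtain ⟨j, hj⟩ := Fin.exists_succAbove_eq (fun h : k = l => hlk h.symm)
      obtain ⟨j', hj'⟩ := Fin.exists_succAbove_eq hlk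
      have h1 : ⟪v k, χ (fun i => v (l.succAbove i))⟫ = 0 := by
        rw [real_inner_comm, ← hj]
        exact hperp (fun i => v (l.succAbove i)) j
      have h2 : ⟪χ (fun i => v (k.succAbove i)), v l⟫ = 0 := by
        rw [← hj']
        exact hperp (fun i => v (k.succAbove i)) j'
      rw [hvl, h1, h2]; ring
    · intro h; exact absurd (Finset.mem_univ k) h
  have hsum : ∑ k : Fin (r+1), ∑ l : Fin (r+1),
          (-1 : ℝ) ^ ((k : ℕ) + (l : ℕ)) *
            (⟪v k, v l⟫ * ⟪χ (fun i => v (k.succAbove i)), χ (fun i => v (l.succAbove i))⟫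
              - ⟪v k, χ (fun i => v (l.succAbove i))⟫ * ⟪χ (fun i => v (k.succAbove i)), v l⟫)
      = ((r : ℝ) + 1) * (D - g 0 ^ 2) := by
    rw [Finset.sum_congr rfl (fun k _ => hinner k), Finset.sum_const, Finset.card_fin]
    push_cast; ring
  have hphi : ⟪χ (fun k => v k.castSucc), v (Fin.last r)⟫ = g (Fin.last r) := by
    simp only [hg, Fin.succAbove_last]
  rw [hsum, hphi, hgsq (Fin.last r), hD]
  have hr : ((r : ℝ) + 1) ≠ 0 := by positivity
  field_simp
  ring
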